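/- Let T = {s_1,…,s_M} ⊆ S_k have nonempty essential set, and suppose there exists j ∉ Fix(T) such that Orb_T(j) ∩ Q_i ≠ ∅ for every i ∈ {1,…,M}. Then the subgroup of Aut(X_k^*) generated by T is infinite. -/

import Mathlib

/-!
Common framework: automorphisms of the rooted tree `X_k^*`, root permutations,
sections, self-similar and contracting groups, Hanoi automorphisms and Hanoi
groups, following Makisumi–Stadnyk–Steinhurst, "Modified Hanoi Towers Groups
and Limit Spaces".

A word `x_n … x_1` over the alphabet `X_k = Fin k` is encoded as the list
`[x_n, …, x_1]`, whose head `x_n` is the first letter, i.e. the letter that a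
tree automorphism reads (and permutes) first.
-/

namespace Hanoi

/-- Words over the alphabet `X_k = Fin k`. -/
abbrev Word (k : ℕ) := List (Fin k)

/-- `e` is an automorphism of the rooted tree `X_k^*`: it fixes the root
(the empty word), preserves word length (levels) and preserves the tree
structure (words sharing an initial segment of length `n` are sent to words
sharing an initial segment of length `n`). -/
def IsTreeAut {k : ℕ} (e : Equiv.Perm (Word k)) : Prop :=
  (∀ w : Word k, (e w).length = w.length) ∧
    ∀ (w v : Word k) (n : ℕ), w.take n = v.take n → (e w).take n = (e v).take n

open Classical in
/-- The root permutation `σ_e` of a tree automorphism `e` (its action on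
one-letter words). -/
noncomputable def rootPerm {k : ℕ} (e : Equiv.Perm (Word k)) : Equiv.Perm (Fin k) :=
  if h : Function.Bijective (fun x : Fin k => ((e [x]).head?.getD x)) then
    Equiv.ofBijective _ h
  else 1

open Classical in
/-- The section `e|_x` of `e` at a letter `x`: the unique automorphism with
`e (x :: w) = σ_e x :: (e|_x) w` for all words `w`. -/
noncomputable def sec {k : ℕ} (e : Equiv.Perm (Word k)) (x : Fin k) : Equiv.Perm (Word k) :=
  if h : Function.Bijective (fun w : Word k => (e (x :: w)).tail) then
    Equiv.ofBijective _ h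
  else 1

/-- The section `e|_v` of `e` at a word `v = x_n … x_1`, defined by
`e|_v = (e|_{x_n})|_{x_{n-1} … x_1}`. -/
noncomputable def secW {k : ℕ} (e : Equiv.Perm (Word k)) : Word k → Equiv.Perm (Word k)
  | [] => e
  | x :: v => secW (sec e x) v

/-- A subgroup of the permutations of `X_k^*` is self-similar if it consists of
tree automorphisms and is closed under taking sections. -/
def IsSelfSimilar {k : ℕ} (G : Subgroup (Equiv.Perm (Word k))) : Prop :=
  (∀ g ∈ G, IsTreeAut g) ∧ ∀ g ∈ G, ∀ x : Fin k, sec g x ∈ G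

/-- A self-similar group `G` is contracting if there is a finite subset `N ⊆ G`
such that for every `g ∈ G` all sections of `g` at words of length at least
some `m` lie in `N`. -/
def IsContracting {k : ℕ} (G : Subgroup (Equiv.Perm (Word k))) : Prop :=
  ∃ N : Set (Equiv.Perm (Word k)), N.Finite ∧ N ⊆ (G : Set (Equiv.Perm (Word k))) ∧
    ∀ g ∈ G, ∃ m : ℕ, ∀ v : Word k, m ≤ v.length → secW g v ∈ N

/-- `N` is the nucleus of `G`: a smallest finite subset of `G` catching all
deep enough sections of every element of `G`. -/
def IsNucleus {k : ℕ} (G : Subgroup (Equiv.Perm (Word k)))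
    (N : Set (Equiv.Perm (Word k))) : Prop :=
  (N.Finite ∧ N ⊆ (G : Set (Equiv.Perm (Word k))) ∧
    ∀ g ∈ G, ∃ m : ℕ, ∀ v : Word k, m ≤ v.length → secW g v ∈ N) ∧
  ∀ N' : Set (Equiv.Perm (Word k)), N'.Finite → N' ⊆ (G : Set (Equiv.Perm (Word k))) →
    (∀ g ∈ G, ∃ m : ℕ, ∀ v : Word k, m ≤ v.length → secW g v ∈ N') → N ⊆ N'

/-- `a` is a Hanoi automorphism with set of inactive pegs `Q`: the section at
each active peg (element of the complement of `Q`) is trivial, the section at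
each inactive peg is `a` itself, and the root permutation fixes each inactive
peg. -/
def IsHanoiWith {k : ℕ} (a : Equiv.Perm (Word k)) (Q : Set (Fin k)) : Prop :=
  IsTreeAut a ∧ (∀ i ∉ Q, sec a i = 1) ∧ (∀ j ∈ Q, sec a j = a) ∧
    ∀ j ∈ Q, rootPerm a j = j

/-- `a` is a `k`-peg Hanoi automorphism. -/
def IsHanoiAut {k : ℕ} (a : Equiv.Perm (Word k)) : Prop := ∃ Q, IsHanoiWith a Q

open Classical in
/-- The set `Q_a` of inactive pegs of a Hanoi automorphism `a`; by convention
`Q_1 = X_k` (for `a ≠ 1` the set of inactive pegs is uniquely determined). -/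
noncomputable def inactivePegs {k : ℕ} (a : Equiv.Perm (Word k)) : Set (Fin k) :=
  if a = 1 then Set.univ
  else if h : ∃ Q, IsHanoiWith a Q then h.choose else ∅

/-- `S_{k,q}`: the set of Hanoi automorphisms over `X_k` with exactly `q`
inactive pegs. -/
noncomputable def hanoiSet (k q : ℕ) : Set (Equiv.Perm (Word k)) :=
  {a | IsHanoiAut a ∧ (inactivePegs a).ncard = q}

/-- `L = [s_n, …, s_1]` is a representation of `g` over the generating set `S`:
each `s_i ∈ S ∪ S⁻¹` and `g = s_n ⋯ s_2 s_1`. -/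
def IsRepOf {k : ℕ} (S : Set (Equiv.Perm (Word k))) (L : List (Equiv.Perm (Word k)))
    (g : Equiv.Perm (Word k)) : Prop :=
  (∀ s ∈ L, s ∈ S ∨ s⁻¹ ∈ S) ∧ L.prod = g

/-- The length `l(g)` of `g` with respect to `S`: the length of a minimal
representation (`0` for the identity). -/
noncomputable def repLength {k : ℕ} (S : Set (Equiv.Perm (Word k)))
    (g : Equiv.Perm (Word k)) : ℕ :=
  sInf {n | ∃ L, IsRepOf S L g ∧ L.length = n}

/-- The essential set of a representation: the intersection of the sets of
inactive pegs of its letters. -/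
noncomputable def essSet {k : ℕ} (L : List (Equiv.Perm (Word k))) : Set (Fin k) :=
  ⋂ s ∈ L, inactivePegs s

/-- The prenucleus of `G`: the set of elements `g ∈ G` with `g|_j = g` for some
letter `j`. -/
noncomputable def preNucleus {k : ℕ} (G : Subgroup (Equiv.Perm (Word k))) :
    Set (Equiv.Perm (Word k)) :=
  {g | g ∈ G ∧ ∃ j : Fin k, sec g j = g}

/-- The underlying function of the Hanoi Towers move `a_{ij}`: it changes the
first occurrence of `i` or `j` in a word by means of the transposition `(i j)`
and leaves the rest of the word unchanged. -/
def hanoiMoveFun {k : ℕ} (i j : Fin k) : Word k → Word k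
  | [] => []
  | x :: w => if x = i ∨ x = j then Equiv.swap i j x :: w else x :: hanoiMoveFun i j w

theorem hanoiMoveFun_involutive {k : ℕ} (i j : Fin k) :
    Function.Involutive (hanoiMoveFun i j) := by
  intro w
  induction w with
  | nil => rfl
  | cons x t ih =>
    by_cases h : x = i ∨ x = j
    · have h2 : Equiv.swap i j x = i ∨ Equiv.swap i j x = j := by
        rcases h with h | h <;> subst h <;> simp
      simp only [hanoiMoveFun, if_pos h, if_pos h2, Equiv.swap_apply_self]
    · simp only [hanoiMoveFun, if_neg h, ih]

/-- The Hanoi Towers move `a_{ij}`, as a permutation of `X_k^*`: its root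
permutation is the transposition `(i j)`, its sections at `i` and `j` are
trivial and all its other sections equal `a_{ij}` itself. -/
def hanoiMove {k : ℕ} (i j : Fin k) : Equiv.Perm (Word k) :=
  (hanoiMoveFun_involutive i j).toPerm

/-- The orbit of the letter `j` under the subgroup of `Sym(X_k)` generated by
the root permutations of the elements of `T`. -/
noncomputable def orbT {k : ℕ} (T : Finset (Equiv.Perm (Word k))) (j : Fin k) : Set (Fin k) :=
  MulAction.orbit (Subgroup.closure ((fun a => rootPerm a) '' (T : Set (Equiv.Perm (Word k))))) j

/-- The set `Fix(T)` of letters fixed by the root permutation of every element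
of `T`. -/
noncomputable def fixT {k : ℕ} (T : Finset (Equiv.Perm (Word k))) : Set (Fin k) :=
  {x | ∀ s ∈ T, rootPerm s x = x}

/-- Condition (*) on a generating set `S` of Hanoi automorphisms: for every
finite `T ⊆ S` with nonempty essential set and every letter `j ∉ Fix(T)`,
the orbit of `j` misses the inactive pegs of some element of `T`. -/
noncomputable def CondStar {k : ℕ} (S : Set (Equiv.Perm (Word k))) : Prop :=
  ∀ T : Finset (Equiv.Perm (Word k)), (T : Set (Equiv.Perm (Word k))) ⊆ S →
    (⋂ s ∈ T, inactivePegs s).Nonempty →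
    ∀ j : Fin k, j ∉ fixT T →
      ∃ s ∈ T, orbT T j ∩ inactivePegs s = ∅

open Classical in
/-- `d(g)`: the least number of distinct generators occurring among all
representations of `g` having nonempty essential set. -/
noncomputable def dCount {k : ℕ} (S : Set (Equiv.Perm (Word k)))
    (g : Equiv.Perm (Word k)) : ℕ :=
  sInf {M | ∃ L, IsRepOf S L g ∧ (essSet L).Nonempty ∧ L.toFinset.card = M}

/-- `S` is fully symmetric: for every non-identity `a ∈ S` and every
`φ ∈ Sym(X_k)`, the Hanoi automorphism `φ·a` with inactive pegs `φ(Q_a)` and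
root permutation `φ ∘ σ_a ∘ φ⁻¹` again lies in `S`. -/
noncomputable def FullySymmetric {k : ℕ} (S : Set (Equiv.Perm (Word k))) : Prop :=
  ∀ a ∈ S, a ≠ 1 → ∀ φ : Equiv.Perm (Fin k), ∀ b : Equiv.Perm (Word k),
    IsHanoiWith b (φ '' inactivePegs a) →
    rootPerm b = φ * rootPerm a * φ⁻¹ → b ∈ S

/-- The family `R̲_{k,n}`: the identity together with all Hanoi automorphisms
`a` such that (1) `Q_a ⊆ {m+1, …, m+n}` for some `m`, and (2) whenever
`i ∈ Q_a` the root permutation of `a` fixes `i-1, …, i-(n-1)`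
(all peg labels mod `k`). -/
noncomputable def Runder (k n : ℕ) : Set (Equiv.Perm (Word k)) :=
  {a | a = 1 ∨ (IsHanoiAut a ∧
    (∃ m : Fin k, ∀ q ∈ inactivePegs a, ∃ t : ℕ, 1 ≤ t ∧ t ≤ n ∧
      (q : ℕ) = ((m : ℕ) + t) % k) ∧
    ∀ i ∈ inactivePegs a, ∀ x : Fin k, ∀ t : ℕ, 1 ≤ t → t ≤ n - 1 →
      ((x : ℕ) + t) % k = (i : ℕ) → rootPerm a x = x)}

/-- The family `R̄_{k,n}`: the identity together with all Hanoi automorphisms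
`a` such that (1) `Q_a ⊆ {m+1, …, m+n}` for some `m`, and (2) whenever
`i ∈ Q_a` the root permutation of `a` fixes `i+1, …, i+(n-1)`
(all peg labels mod `k`). -/
noncomputable def Rover (k n : ℕ) : Set (Equiv.Perm (Word k)) :=
  {a | a = 1 ∨ (IsHanoiAut a ∧
    (∃ m : Fin k, ∀ q ∈ inactivePegs a, ∃ t : ℕ, 1 ≤ t ∧ t ≤ n ∧
      (q : ℕ) = ((m : ℕ) + t) % k) ∧
    ∀ i ∈ inactivePegs a, ∀ x : Fin k, ∀ t : ℕ, 1 ≤ t → t ≤ n - 1 →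
      (x : ℕ) = ((i : ℕ) + t) % k → rootPerm a x = x)}

/-- The finite word `x_m … x_1` (first letter `x_m`) read off from a
left-infinite sequence `… x_2 x_1`, encoded as `x : ℕ → Fin k` with
`x s = x_{s+1}`. -/
def wordOf {k : ℕ} (x : ℕ → Fin k) (m : ℕ) : Word k := (List.range m).reverse.map x

/-! ### Auxiliary lemmas for `infinite_subgroup_of_condStar_failure` -/

section AuxInfinite

variable {k : ℕ}

lemma perm_apply_inv_self' {α : Type*} (e : Equiv.Perm α) (x : α) : e (e⁻¹ x) = x :=
  Equiv.apply_symm_apply e x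

lemma perm_inv_apply_self' {α : Type*} (e : Equiv.Perm α) (x : α) : e⁻¹ (e x) = x :=
  Equiv.symm_apply_apply e x

lemma IsTreeAut.apply_nil {e : Equiv.Perm (Word k)} (h : IsTreeAut e) : e [] = [] :=
  List.length_eq_zero_iff.mp (by simpa using h.1 [])

lemma IsTreeAut.head_bij {e : Equiv.Perm (Word k)} (h : IsTreeAut e) :
    Function.Bijective (fun x : Fin k => ((e [x]).head?.getD x)) := by
  rw [← Finite.injective_iff_bijective]
  intro x y hxy
  obtain ⟨a, ha⟩ := List.length_eq_one_iff.mp (by simpa using h.1 [x])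
  obtain ⟨b, hb⟩ := List.length_eq_one_iff.mp (by simpa using h.1 [y])
  simp only [ha, hb, List.head?_cons, Option.getD_some] at hxy
  have : e [x] = e [y] := by rw [ha, hb, hxy]
  simpa using e.injective this

lemma rootPerm_apply_word {e : Equiv.Perm (Word k)} (h : IsTreeAut e) (x : Fin k) :
    e [x] = [rootPerm e x] := by
  rw [rootPerm, dif_pos h.head_bij]
  obtain ⟨a, ha⟩ := List.length_eq_one_iff.mp (by simpa using h.1 [x])
  simp [Equiv.ofBijective_apply, ha]

lemma IsTreeAut.cons_eq_tail {e : Equiv.Perm (Word k)} (h : IsTreeAut e) (x : Fin k)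
    (w : Word k) : e (x :: w) = rootPerm e x :: (e (x :: w)).tail := by
  have ht := h.2 (x :: w) [x] 1 (by simp)
  rw [rootPerm_apply_word h x] at ht
  cases hc : e (x :: w) with
  | nil =>
    have := h.1 (x :: w)
    rw [hc] at this
    simp at this
  | cons a t =>
    rw [hc] at ht
    simp only [List.take_succ_cons, List.take_zero, List.take_cons, List.take] at ht
    simp at ht
    simp [ht]

lemma IsTreeAut.inv_length {e : Equiv.Perm (Word k)} (h : IsTreeAut e) (w : Word k) :
    (e⁻¹ w).length = w.length := by
  have := h.1 (e⁻¹ w)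
  rw [perm_apply_inv_self'] at this
  exact this.symm

lemma IsTreeAut.sec_bij {e : Equiv.Perm (Word k)} (h : IsTreeAut e) (x : Fin k) :
    Function.Bijective (fun w : Word k => (e (x :: w)).tail) := by
  constructor
  · intro w w' hw
    have h1 := h.cons_eq_tail x w
    have h2 := h.cons_eq_tail x w'
    have : e (x :: w) = e (x :: w') := by
      rw [h1, h2]
      simpa using hw
    simpa using e.injective this
  · intro v
    have hlen : (e⁻¹ (rootPerm e x :: v)).length = v.length + 1 := by
      simpa using h.inv_length (rootPerm e x :: v)
    rcases hc : e⁻¹ (rootPerm e x :: v) with _ | ⟨y, w⟩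
    · rw [hc] at hlen; simp at hlen
    · have he : e (y :: w) = rootPerm e x :: v := by
        rw [← hc, perm_apply_inv_self']
      have he2 : e (y :: w) = rootPerm e y :: (e (y :: w)).tail := h.cons_eq_tail y w
      rw [he] at he2
      injection he2 with h1 _
      have hyx : y = x := ((rootPerm e).injective h1).symm
      subst hyx
      refine ⟨w, ?_⟩
      show (e (y :: w)).tail = v
      simp [he]

lemma IsTreeAut.apply_cons {e : Equiv.Perm (Word k)} (h : IsTreeAut e) (x : Fin k)
    (w : Word k) : e (x :: w) = rootPerm e x :: sec e x w := by
  rw [sec, dif_pos (h.sec_bij x)]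
  simpa [Equiv.ofBijective_apply] using h.cons_eq_tail x w

lemma isTreeAut_one : IsTreeAut (1 : Equiv.Perm (Word k)) :=
  ⟨fun w => by simp, fun w v n hn => by simpa using hn⟩

lemma rootPerm_one : rootPerm (1 : Equiv.Perm (Word k)) = 1 := by
  ext x
  have := rootPerm_apply_word (isTreeAut_one (k := k)) x
  simp at this
  simp [this.symm]

lemma sec_one (x : Fin k) : sec (1 : Equiv.Perm (Word k)) x = 1 := by
  ext w
  have := (isTreeAut_one (k := k)).apply_cons x w
  simp at this
  simp [this.2.symm]

lemma isHanoiWith_one : IsHanoiWith (1 : Equiv.Perm (Word k)) Set.univ :=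
  ⟨isTreeAut_one, fun i hi => absurd (Set.mem_univ i) hi, fun j _ => sec_one j,
    fun j _ => by rw [rootPerm_one]; rfl⟩

lemma isHanoiWith_inactivePegs {a : Equiv.Perm (Word k)} (h : IsHanoiAut a) :
    IsHanoiWith a (inactivePegs a) := by
  rw [inactivePegs]
  split_ifs with h1 h2
  · subst h1; exact isHanoiWith_one
  · exact h2.choose_spec
  · exact absurd h h2

lemma IsHanoiWith.cons_mem {a : Equiv.Perm (Word k)} {Q : Set (Fin k)}
    (hh : IsHanoiWith a Q) {x : Fin k} (hx : x ∈ Q) (w : Word k) :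
    a (x :: w) = x :: a w := by
  rw [hh.1.apply_cons, hh.2.2.1 x hx, hh.2.2.2 x hx]

lemma IsHanoiWith.cons_not_mem {a : Equiv.Perm (Word k)} {Q : Set (Fin k)}
    (hh : IsHanoiWith a Q) {x : Fin k} (hx : x ∉ Q) (w : Word k) :
    a (x :: w) = rootPerm a x :: w := by
  rw [hh.1.apply_cons, hh.2.1 x hx]
  rfl

lemma IsHanoiWith.inv_cons_mem {a : Equiv.Perm (Word k)} {Q : Set (Fin k)}
    (hh : IsHanoiWith a Q) {x : Fin k} (hx : x ∈ Q) (w : Word k) :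
    a⁻¹ (x :: w) = x :: a⁻¹ w := by
  apply a.injective
  rw [perm_apply_inv_self', hh.cons_mem hx, perm_apply_inv_self']

/-- One step of the `T`-action on words. -/
def HStep {k : ℕ} (T : Finset (Equiv.Perm (Word k))) (u v : Word k) : Prop :=
  ∃ s ∈ T, s u = v ∨ s⁻¹ u = v

/-- Reachability under the `T`-action on words. -/
def HReach {k : ℕ} (T : Finset (Equiv.Perm (Word k))) : Word k → Word k → Prop :=
  Relation.ReflTransGen (HStep T)

lemma hstep_symm {T : Finset (Equiv.Perm (Word k))} : Symmetric (HStep T) := by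
  rintro u v ⟨s, hs, h | h⟩
  · exact ⟨s, hs, Or.inr (by rw [← h, perm_inv_apply_self'])⟩
  · exact ⟨s, hs, Or.inl (by rw [← h, perm_apply_inv_self'])⟩

lemma hreach_symm {T : Finset (Equiv.Perm (Word k))} {u v : Word k}
    (h : HReach T u v) : HReach T v u :=
  by haveI : Std.Symm (HStep T) := ⟨fun _ _ h => hstep_symm h⟩; exact Std.Symm.symm (r := Relation.ReflTransGen (HStep T)) _ _ h

lemma hreach_exists {T : Finset (Equiv.Perm (Word k))} {u v : Word k} (h : HReach T u v) :
    ∃ g ∈ Subgroup.closure (T : Set (Equiv.Perm (Word k))), g u = v := by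
  induction h with
  | refl => exact ⟨1, one_mem _, rfl⟩
  | tail hab hbc ih =>
    obtain ⟨g, hg, hgu⟩ := ih
    obtain ⟨s, hs, hcase⟩ := hbc
    cases hcase with
    | inl h1 =>
      exact ⟨s * g, mul_mem (Subgroup.subset_closure hs) hg,
        by rw [Equiv.Perm.mul_apply, hgu, h1]⟩
    | inr h1 =>
      exact ⟨s⁻¹ * g, mul_mem (inv_mem (Subgroup.subset_closure hs)) hg,
        by rw [Equiv.Perm.mul_apply, hgu, h1]⟩

end AuxInfinite


/-- from the proof of Theorem `hanoicontraction2`: failure of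
condition (*) yields an infinite subgroup.
Let `T = {s_1, …, s_M} ⊆ S_k` have nonempty essential set and suppose some
`j ∉ Fix(T)` has `Orb_T(j) ∩ Q_i ≠ ∅` for every `i`.  Then the subgroup
generated by `T` is infinite. -/
theorem infinite_subgroup_of_condStar_failure {k : ℕ}
    (T : Finset (Equiv.Perm (Word k))) (hT : ∀ s ∈ T, IsHanoiAut s)
    (hQ : (⋂ s ∈ T, inactivePegs s).Nonempty)
    (j : Fin k) (hj : j ∉ fixT T)
    (horb : ∀ s ∈ T, (orbT T j ∩ inactivePegs s).Nonempty) :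
    (Subgroup.closure (T : Set (Equiv.Perm (Word k))) :
      Set (Equiv.Perm (Word k))).Infinite := by
  classical
  have hj' : ∃ s ∈ T, rootPerm s j ≠ j := by
    by_contra hcon
    push_neg at hcon
    exact hj hcon
  obtain ⟨s0, hs0, hs0j⟩ := hj'
  set H := Subgroup.closure ((fun a => rootPerm a) '' (T : Set (Equiv.Perm (Word k)))) with hH
  have hmemO : ∀ x : Fin k, x ∈ orbT T j ↔ ∃ ρ ∈ H, ρ j = x := by
    intro x
    simp only [orbT, MulAction.mem_orbit_iff, ← hH]
    constructor
    · rintro ⟨⟨ρ, hρ⟩, hx⟩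
      exact ⟨ρ, hρ, hx⟩
    · rintro ⟨ρ, hρ, hx⟩
      exact ⟨⟨ρ, hρ⟩, hx⟩
  have navTop : ∀ ρ : Equiv.Perm (Fin k), ρ ∈ H → ∀ (x : Fin k) (u : Word k),
      HReach T (x :: u) (ρ x :: u) := by
    intro ρ hρ
    induction hρ using Subgroup.closure_induction with
    | mem s hsmem =>
      obtain ⟨t, ht, rfl⟩ := hsmem
      intro x u
      have hh := isHanoiWith_inactivePegs (hT t ht)
      by_cases hx : x ∈ inactivePegs t
      · rw [hh.2.2.2 x hx]
        exact Relation.ReflTransGen.refl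
      · exact Relation.ReflTransGen.single ⟨t, ht, Or.inl (hh.cons_not_mem hx u)⟩
    | one =>
      intro x u
      exact Relation.ReflTransGen.refl
    | mul ρ1 ρ2 h1 h2 ih1 ih2 =>
      intro x u
      have h3 := (ih2 x u).trans (ih1 (ρ2 x) u)
      simpa [Equiv.Perm.mul_apply, HReach] using h3
    | inv ρ1 h1 ih =>
      intro x u
      have h3 := ih (ρ1⁻¹ x) u
      rw [perm_apply_inv_self'] at h3
      exact hreach_symm h3
  have navO : ∀ x ∈ orbT T j, ∀ y ∈ orbT T j, ∀ u : Word k,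
      HReach T (x :: u) (y :: u) := by
    intro x hx y hy u
    obtain ⟨ρ1, hρ1, hρ1j⟩ := (hmemO x).mp hx
    obtain ⟨ρ2, hρ2, hρ2j⟩ := (hmemO y).mp hy
    have hxy : (ρ2 * ρ1⁻¹) x = y := by
      rw [Equiv.Perm.mul_apply, ← hρ1j, perm_inv_apply_self', hρ2j]
    have h3 := navTop (ρ2 * ρ1⁻¹) (mul_mem hρ2 (inv_mem hρ1)) x u
    rwa [hxy] at h3
  have sim : ∀ u v : Word k, HReach T u v → ∀ x ∈ orbT T j, ∀ y ∈ orbT T j,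
      HReach T (x :: u) (y :: v) := by
    intro u v h
    induction h with
    | refl => intro x hx y hy; exact navO x hx y hy u
    | tail hab hbc ih =>
      intro x hx y hy
      obtain ⟨s, hs, hcase⟩ := hbc
      obtain ⟨z, hz⟩ := horb s hs
      have hh := isHanoiWith_inactivePegs (hT s hs)
      refine Relation.ReflTransGen.trans
        (Relation.ReflTransGen.tail (ih x hx z hz.1) ⟨s, hs, ?_⟩)
        (navO z hz.1 y hy _)
      cases hcase with
      | inl h1 => exact Or.inl (by rw [hh.cons_mem hz.2, h1])
      | inr h1 => exact Or.inr (by rw [hh.inv_cons_mem hz.2, h1])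
  have hjO : j ∈ orbT T j := (hmemO j).mpr ⟨1, one_mem _, rfl⟩
  have reach_rep : ∀ w : Word k, (∀ a ∈ w, a ∈ orbT T j) →
      HReach T (List.replicate w.length j) w := by
    intro w
    induction w with
    | nil => intro _; exact Relation.ReflTransGen.refl
    | cons y w' ih =>
      intro hmem
      have h1 := ih fun a ha => hmem a (List.mem_cons_of_mem _ ha)
      have h2 := sim _ _ h1 j hjO y (hmem y (List.mem_cons_self))
      simpa [List.replicate_succ] using h2
  by_contra hfin
  rw [Set.not_infinite] at hfin
  set N := hfin.toFinset.card with hN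
  have hj2O : rootPerm s0 j ∈ orbT T j :=
    (hmemO _).mpr ⟨rootPerm s0, Subgroup.subset_closure ⟨s0, hs0, rfl⟩, rfl⟩
  set f : (Fin N → Bool) → Word k :=
    fun b => List.ofFn fun i => if b i then rootPerm s0 j else j with hf
  have hf_inj : Function.Injective f := by
    intro b b' hb
    have h3 := List.ofFn_inj.mp hb
    funext i
    have h4 := congrFun h3 i
    by_cases hbi : b i <;> by_cases hbi' : b' i <;>
      simp only [hbi, hbi', if_true, if_false, if_pos, if_neg] at h4 ⊢
    · exact absurd h4 hs0j
    · exact absurd h4.symm hs0j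
  have hrep : ∀ b : Fin N → Bool,
      ∃ g ∈ Subgroup.closure (T : Set (Equiv.Perm (Word k))),
        g (List.replicate N j) = f b := by
    intro b
    have hlen : (f b).length = N := by simp [hf]
    have hmem : ∀ a ∈ f b, a ∈ orbT T j := by
      intro a ha
      simp only [hf, List.mem_ofFn] at ha
      obtain ⟨i, hi⟩ := ha
      by_cases hbi : b i
      · simp only [hbi, if_true] at hi; rw [← hi]; exact hj2O
      · simp only [hbi, if_false, Bool.false_eq_true] at hi; rw [← hi]; exact hjO
    have h5 := reach_rep (f b) hmem
    rw [hlen] at h5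
    exact hreach_exists h5
  choose g hg1 hg2 using hrep
  have hcard : Fintype.card (Fin N → Bool) ≤ Fintype.card hfin.toFinset := by
    apply Fintype.card_le_of_injective
      (fun b => (⟨g b, hfin.mem_toFinset.mpr (hg1 b)⟩ : hfin.toFinset))
    intro b b' hbb
    apply hf_inj
    rw [← hg2 b, ← hg2 b']
    have : g b = g b' := congrArg Subtype.val hbb
    rw [this]
  rw [Fintype.card_coe, Fintype.card_fun, Fintype.card_bool, Fintype.card_fin] at hcard
  exact absurd hcard (not_le.mpr (Nat.lt_two_pow_self (n := N)))

end Hanoi
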